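/- Let A ⊆ ℝ^ω be range-invariant. Then player I has a winning strategy in the Gale–Stewart game on ℝ with payoff A if and only if there is a function f : ℝ^{<ω} → ℝ such that for every countable set of reals a closed under f, every enumeration of a (as an ω-sequence) belongs to A. -/
import Mathlib

/-- The finite sequence of the first `n` moves of a play `x` of reals. -/
def playPrefix (x : ℕ → ℝ) (n : ℕ) : List ℝ :=
  List.ofFn fun i : Fin n => x i

/-- A payoff set `A ⊆ ℝ^ω` is range-invariant if membership depends only on the range. -/
def RangeInvariant (A : Set (ℕ → ℝ)) : Prop :=
  ∀ x y : ℕ → ℝ, Set.range x = Set.range y → (x ∈ A ↔ y ∈ A)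

/-- Prefixes of the play where I follows σ and II enumerates via e. -/
noncomputable def closPl (σ : List ℝ → ℝ) (e : ℕ → ℝ) : ℕ → List ℝ
  | 0 => []
  | n+1 => closPl σ e n ++ [if Even n then σ (closPl σ e n) else e (n/2)]

/-- The moves of that play. -/
noncomputable def closMv (σ : List ℝ → ℝ) (e : ℕ → ℝ) (n : ℕ) : ℝ :=
  if Even n then σ (closPl σ e n) else e (n/2)

lemma closPl_len (σ : List ℝ → ℝ) (e : ℕ → ℝ) (n : ℕ) : (closPl σ e n).length = n := by
  induction n with
  | zero => rfl
  | succ n ih => simp [closPl, ih]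

lemma closPl_eq_prefix (σ : List ℝ → ℝ) (e : ℕ → ℝ) (n : ℕ) :
    playPrefix (closMv σ e) n = closPl σ e n := by
  induction n with
  | zero => rfl
  | succ n ih =>
    rw [playPrefix, List.ofFn_succ', List.concat_eq_append, closPl]
    have h1 : (List.ofFn fun i : Fin n => closMv σ e i.castSucc) = closPl σ e n := by
      simpa [playPrefix] using ih
    rw [h1]
    simp [closMv]

lemma mem_closPl (σ : List ℝ → ℝ) (e : ℕ → ℝ) (n : ℕ) (r : ℝ) (h : r ∈ closPl σ e n) :
    ∃ i < n, closMv σ e i = r := by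
  rw [← closPl_eq_prefix] at h
  rw [playPrefix] at h
  obtain ⟨i, hi⟩ : ∃ i : Fin n, closMv σ e i = r := by simpa [List.mem_ofFn] using h
  exact ⟨i, i.isLt, hi⟩

/-- The strategy constructed from a closure function `f`. -/
noncomputable def closStrat (f : List ℝ → ℝ) (p : List ℝ) : ℝ :=
  match Encodable.decode (α := List ℕ) (Nat.unpair (p.length / 2)).2 with
  | some l => if _ : ∀ i ∈ l, i < p.length then f (l.map fun i => p.getD i 0) else f []
  | none => f []

lemma list_lt_bound (l : List ℕ) : ∀ i ∈ l, i < l.foldr max 0 + 1 := by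
  induction l with
  | nil => simp
  | cons a t ih =>
    intro i hi
    rcases List.mem_cons.1 hi with h | h
    · subst h; simp [Nat.lt_succ_iff]
    · have := ih i h
      simp only [List.foldr_cons]
      omega

theorem winning_strategy_iff_closure_function
    (A : Set (ℕ → ℝ)) (hA : RangeInvariant A) :
    (∃ σ : List ℝ → ℝ, ∀ x : ℕ → ℝ,
        (∀ n, x (2 * n) = σ (playPrefix x (2 * n))) → x ∈ A) ↔
    (∃ f : List ℝ → ℝ, ∀ a : Set ℝ, a.Countable →
        (∀ s : List ℝ, (∀ r ∈ s, r ∈ a) → f s ∈ a) →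
        ∀ x : ℕ → ℝ, Set.range x = a → x ∈ A) := by
  constructor
  · rintro ⟨σ, hσ⟩
    refine ⟨σ, fun a ha hclosed x hx => ?_⟩
    have hne : a.Nonempty := hx ▸ Set.range_nonempty x
    obtain ⟨e, he⟩ := Set.Countable.exists_eq_range ha hne
    set y := closMv σ e with hy
    have hy_in : y ∈ A := by
      apply hσ
      intro n
      rw [closPl_eq_prefix]
      have : Even (2 * n) := even_two_mul n
      simp [hy, closMv, this]
    have hmem : ∀ n, y n ∈ a := by
      intro n
      induction n using Nat.strong_induction_on with
      | _ n ih =>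
        by_cases h : Even n
        · have : y n = σ (closPl σ e n) := by simp [hy, closMv, h]
          rw [this]
          apply hclosed
          intro r hr
          obtain ⟨i, hi, hir⟩ := mem_closPl σ e n r hr
          exact hir ▸ ih i hi
        · have : y n = e (n / 2) := by simp [hy, closMv, h]
          rw [this, he]
          exact Set.mem_range_self _
    have hsub : a ⊆ Set.range y := by
      rw [he]
      rintro r ⟨k, rfl⟩
      refine ⟨2 * k + 1, ?_⟩
      have h1 : ¬ Even (2 * k + 1) := by simp [Nat.even_add_one, Nat.even_mul]
      simp only [hy, closMv, if_neg h1]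
      congr 1
      omega
    have hrange : Set.range y = a := Set.Subset.antisymm (Set.range_subset_iff.2 hmem) hsub
    exact (hA x y (hx.trans hrange.symm)).2 hy_in
  · rintro ⟨f, hf⟩
    refine ⟨closStrat f, fun x hx => ?_⟩
    apply hf (Set.range x) (Set.countable_range x) _ x rfl
    intro s hs
    -- build index list l with s = l.map x
    have hchoose : ∀ r ∈ s, ∃ i, x i = r := by
      intro r hr; exact hs r hr
    choose g hg using hchoose
    set l : List ℕ := s.attach.map (fun r => g r.1 r.2) with hl
    have hmap : l.map (fun i => x i) = s := by
      rw [hl, List.map_map]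
      conv_rhs => rw [← List.attach_map_subtype_val s]
      apply List.map_congr_left
      intro r _
      exact hg r.1 r.2
    set m := l.foldr max 0 + 1 with hm
    set n := Nat.pair m (Encodable.encode l) with hn
    have hmn : m ≤ n := Nat.left_le_pair _ _
    have hlt : ∀ i ∈ l, i < 2 * n := by
      intro i hi
      have := list_lt_bound l i hi
      omega
    have hlen : (playPrefix x (2 * n)).length = 2 * n := by
      simp [playPrefix]
    have hgetD : ∀ i ∈ l, (playPrefix x (2 * n)).getD i 0 = x i := by
      intro i hi
      rw [List.getD_eq_getElem _ _ (by rw [hlen]; exact hlt i hi)]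
      simp [playPrefix]
    have hx2n := hx n
    rw [closStrat] at hx2n
    rw [hlen] at hx2n
    have h2 : 2 * n / 2 = n := by omega
    rw [h2, hn, Nat.unpair_pair, Encodable.encodek] at hx2n
    simp only [← hn] at hx2n
    rw [dif_pos hlt] at hx2n
    have : (l.map fun i => (playPrefix x (2*n)).getD i 0) = s := by
      rw [← hmap]
      exact List.map_congr_left hgetD
    rw [this] at hx2n
    exact ⟨2 * n, hx2n⟩
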